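/- arXiv:math/0405483 — 2 statements merged into one kernel-verified Lean document; each statement's English description precedes it below -/
import Mathlib

section
/- Let γ : [A,B] → ℝ^N be an injective continuous curve of finite total curvature. Then for every a ∈ [A,B), the strong one-sided tangent T⁺(a) = lim_{a ≤ x < y, y → a} (γ(y) - γ(x))/‖γ(y) - γ(x)‖ exists; similarly for every b ∈ (A,B] the left strong tangent T₋(b) = lim_{x < y ≤ b, x → b} (γ(y) - γ(x))/‖γ(y) - γ(x)‖ exists. -/
open Set Filter


/-- Sum of exterior angles of the inscribed polygon with vertices `γ (t 0), …, γ (t (n+1))`,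
the angles being taken at the `n` interior vertices. -/
noncomputable def polySum {E : Type*} [NormedAddCommGroup E] [InnerProductSpace ℝ E]
    (γ : ℝ → E) {n : ℕ} (t : Fin (n + 2) → ℝ) : ℝ :=
  ∑ i : Fin n, InnerProductGeometry.angle
    (γ (t i.castSucc.succ) - γ (t i.castSucc.castSucc))
    (γ (t i.succ.succ) - γ (t i.castSucc.succ))

/-- The set of angle–sums of polygons inscribed in `γ` with vertices in `s`. -/
def polySums {E : Type*} [NormedAddCommGroup E] [InnerProductSpace ℝ E]
    (γ : ℝ → E) (s : Set ℝ) : Set ℝ :=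
  {A | ∃ (n : ℕ) (t : Fin (n + 2) → ℝ), StrictMono t ∧ (∀ i, t i ∈ s) ∧ A = polySum γ t}

/-- Total curvature of `γ` on the parameter set `s` : the supremum of the angle sums
of inscribed polygons with vertices in `s`. -/
noncomputable def totalCurvatureOn {E : Type*} [NormedAddCommGroup E] [InnerProductSpace ℝ E]
    (γ : ℝ → E) (s : Set ℝ) : ℝ :=
  sSup (polySums γ s)

/-- Cyclic angle sum for a closed (period-one) curve: vertices `γ (t 0), …, γ (t n)` within one
period, the chords taken cyclically (`Fin (n+1)` addition wraps around). -/
noncomputable def closedPolySum {E : Type*} [NormedAddCommGroup E] [InnerProductSpace ℝ E]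
    (γ : ℝ → E) {n : ℕ} (t : Fin (n + 1) → ℝ) : ℝ :=
  ∑ i : Fin (n + 1), InnerProductGeometry.angle
    (γ (t (i + 1)) - γ (t i)) (γ (t (i + 1 + 1)) - γ (t (i + 1)))

/-- Angle sums of closed polygons inscribed in a period-one closed curve `γ`. -/
def closedPolySums {E : Type*} [NormedAddCommGroup E] [InnerProductSpace ℝ E]
    (γ : ℝ → E) : Set ℝ :=
  {A | ∃ (n : ℕ) (t : Fin (n + 1) → ℝ), StrictMono t ∧ t (Fin.last n) < t 0 + 1 ∧
    A = closedPolySum γ t}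

/-- Total curvature of a closed (period-one) curve. -/
noncomputable def closedTotalCurvature {E : Type*} [NormedAddCommGroup E]
    [InnerProductSpace ℝ E] (γ : ℝ → E) : ℝ :=
  sSup (closedPolySums γ)



section AuxAngle

open InnerProductGeometry Real RealInnerProductSpace

variable {V : Type*} [NormedAddCommGroup V] [InnerProductSpace ℝ V]

private lemma antitone_arccos : Antitone Real.arccos := fun a b h => by
  unfold Real.arccos
  have := Real.monotone_arcsin h
  linarith

/-- Triangle inequality for the unoriented angle, unit-vector case. -/
private lemma angle_triangle_unit {x y z : V} (hx : ‖x‖ = 1) (hy : ‖y‖ = 1) (hz : ‖z‖ = 1)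
    (hπ : angle x y + angle y z < π) : angle x z ≤ angle x y + angle y z := by
  set α := angle x y with hα
  set β := angle y z with hβ
  have hca : (⟪x, y⟫) = Real.cos α := by
    have := cos_angle x y
    rw [hx, hy] at this
    simpa using this.symm
  have hcb : (⟪y, z⟫) = Real.cos β := by
    have := cos_angle y z
    rw [hy, hz] at this
    simpa using this.symm
  set u := x - (⟪x, y⟫) • y with hu
  set w := z - (⟪z, y⟫) • y with hw
  have hinxx : (⟪x, x⟫) = 1 := by rw [real_inner_self_eq_norm_sq, hx]; norm_num
  have hinyy : (⟪y, y⟫) = 1 := by rw [real_inner_self_eq_norm_sq, hy]; norm_num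
  have hinzz : (⟪z, z⟫) = 1 := by rw [real_inner_self_eq_norm_sq, hz]; norm_num
  have hu2 : ‖u‖ ^ 2 = Real.sin α ^ 2 := by
    rw [hu, norm_sub_sq_real, real_inner_smul_right, norm_smul]
    rw [hx, hca]
    have : Real.sin α ^ 2 = 1 - Real.cos α ^ 2 := Real.sin_sq α
    rw [this]
    simp [hy, abs_mul_abs_self, sq]
    ring
  have hczy : (⟪z, y⟫) = Real.cos β := (real_inner_comm y z).trans hcb
  have hw2 : ‖w‖ ^ 2 = Real.sin β ^ 2 := by
    rw [hw, norm_sub_sq_real, real_inner_smul_right, norm_smul]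
    rw [hz, hczy]
    have : Real.sin β ^ 2 = 1 - Real.cos β ^ 2 := Real.sin_sq β
    rw [this]
    simp [hy, abs_mul_abs_self, sq]
    ring
  have hsa : 0 ≤ Real.sin α := Real.sin_nonneg_of_nonneg_of_le_pi (angle_nonneg x y) (angle_le_pi x y)
  have hsb : 0 ≤ Real.sin β := Real.sin_nonneg_of_nonneg_of_le_pi (angle_nonneg y z) (angle_le_pi y z)
  have hun : ‖u‖ = Real.sin α := by nlinarith [norm_nonneg u]
  have hwn : ‖w‖ = Real.sin β := by nlinarith [norm_nonneg w]
  have hkey : (⟪u, w⟫) = (⟪x, z⟫) - Real.cos α * Real.cos β := by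
    rw [hu, hw]
    rw [inner_sub_left, inner_sub_right, inner_sub_right, real_inner_smul_left,
      real_inner_smul_left, real_inner_smul_right, real_inner_smul_right]
    rw [hinyy, hczy, hca, hcb]
    ring
  have habs : |(⟪u, w⟫)| ≤ Real.sin α * Real.sin β := by
    rw [← hun, ← hwn]
    exact abs_real_inner_le_norm u w
  have hcoslb : Real.cos (α + β) ≤ (⟪x, z⟫) := by
    rw [Real.cos_add]
    have := abs_le.mp habs
    nlinarith [this.1]
  have h0 : 0 ≤ α + β := add_nonneg (angle_nonneg _ _) (angle_nonneg _ _)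
  have hxz : angle x z = Real.arccos (⟪x, z⟫) := by
    unfold InnerProductGeometry.angle
    rw [hx, hz]
    norm_num
  rw [hxz]
  calc Real.arccos (⟪x, z⟫) ≤ Real.arccos (Real.cos (α + β)) := _root_.antitone_arccos hcoslb
    _ = α + β := Real.arccos_cos h0 hπ.le

/-- Triangle inequality for the unoriented angle. -/
lemma my_angle_triangle (x y z : V) : angle x z ≤ angle x y + angle y z := by
  rcases eq_or_ne x 0 with rfl | hx
  · rw [angle_zero_left, angle_zero_left]
    linarith [angle_nonneg y z]
  rcases eq_or_ne z 0 with rfl | hz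
  · rw [angle_zero_right, angle_zero_right]
    linarith [angle_nonneg x y]
  rcases eq_or_ne y 0 with rfl | hy
  · rw [angle_zero_right, angle_zero_left]
    linarith [angle_le_pi x z]
  by_cases hπ : π ≤ angle x y + angle y z
  · exact (angle_le_pi x z).trans hπ
  push_neg at hπ
  have hxp : (0:ℝ) < ‖x‖⁻¹ := inv_pos.mpr (norm_pos_iff.mpr hx)
  have hyp : (0:ℝ) < ‖y‖⁻¹ := inv_pos.mpr (norm_pos_iff.mpr hy)
  have hzp : (0:ℝ) < ‖z‖⁻¹ := inv_pos.mpr (norm_pos_iff.mpr hz)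
  have e1 : angle (‖x‖⁻¹ • x) (‖y‖⁻¹ • y) = angle x y := by
    rw [angle_smul_left_of_pos _ _ hxp, angle_smul_right_of_pos _ _ hyp]
  have e2 : angle (‖y‖⁻¹ • y) (‖z‖⁻¹ • z) = angle y z := by
    rw [angle_smul_left_of_pos _ _ hyp, angle_smul_right_of_pos _ _ hzp]
  have e3 : angle (‖x‖⁻¹ • x) (‖z‖⁻¹ • z) = angle x z := by
    rw [angle_smul_left_of_pos _ _ hxp, angle_smul_right_of_pos _ _ hzp]
  rw [← e1, ← e2, ← e3]
  exact angle_triangle_unit (norm_smul_inv_norm hx) (norm_smul_inv_norm hy)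
    (norm_smul_inv_norm hz) (by rw [e1, e2]; exact hπ)

/-- The distance between normalized vectors is at most the angle between them. -/
lemma norm_normalized_sub_le (x y : V) (hx : x ≠ 0) (hy : y ≠ 0) :
    ‖‖x‖⁻¹ • x - ‖y‖⁻¹ • y‖ ≤ angle x y := by
  set u := ‖x‖⁻¹ • x with huu
  set v := ‖y‖⁻¹ • y with hvv
  have hu : ‖u‖ = 1 := norm_smul_inv_norm hx
  have hv : ‖v‖ = 1 := norm_smul_inv_norm hy
  have hang : angle u v = angle x y := by
    rw [huu, hvv, angle_smul_left_of_pos _ _ (inv_pos.mpr (norm_pos_iff.mpr hx)),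
      angle_smul_right_of_pos _ _ (inv_pos.mpr (norm_pos_iff.mpr hy))]
  set θ := angle x y with hθ
  have hθ0 : 0 ≤ θ := angle_nonneg x y
  have hθπ : θ ≤ π := angle_le_pi x y
  have hcos : (⟪u, v⟫) = Real.cos θ := by
    have := cos_angle u v
    rw [hu, hv, hang] at this
    simpa using this.symm
  have hsq : ‖u - v‖ ^ 2 = 2 - 2 * Real.cos θ := by
    rw [norm_sub_sq_real, hu, hv, hcos]; ring
  have h2 : 2 - 2 * Real.cos θ = 4 * Real.sin (θ / 2) ^ 2 := by
    have := Real.sin_sq_eq_half_sub (θ / 2)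
    rw [show 2 * (θ / 2) = θ by ring] at this
    linarith
  have hs1 : Real.sin (θ / 2) ≤ θ / 2 := Real.sin_le (by linarith)
  have hs0 : 0 ≤ Real.sin (θ / 2) :=
    Real.sin_nonneg_of_nonneg_of_le_pi (by linarith) (by linarith [Real.pi_pos])
  have hle : ‖u - v‖ ^ 2 ≤ θ ^ 2 := by rw [hsq, h2]; nlinarith
  calc ‖u - v‖ = √(‖u - v‖ ^ 2) := (Real.sqrt_sq (norm_nonneg _)).symm
    _ ≤ √(θ ^ 2) := Real.sqrt_le_sqrt hle
    _ = θ := Real.sqrt_sq hθ0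

end AuxAngle


section AuxPoly

open InnerProductGeometry

variable {V : Type*} [NormedAddCommGroup V] [InnerProductSpace ℝ V]

noncomputable def natPolySum (γ : ℝ → V) (n : ℕ) (t : ℕ → ℝ) : ℝ :=
  ∑ i ∈ Finset.range n,
    angle (γ (t (i + 1)) - γ (t i)) (γ (t (i + 2)) - γ (t (i + 1)))

lemma natPolySum_nonneg (γ : ℝ → V) (n : ℕ) (t : ℕ → ℝ) : 0 ≤ natPolySum γ n t :=
  Finset.sum_nonneg fun _ _ => angle_nonneg _ _

lemma polySum_eq_natPolySum (γ : ℝ → V) {n : ℕ} (u : Fin (n + 2) → ℝ) (t : ℕ → ℝ)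
    (h : ∀ i (hi : i ≤ n + 1), t i = u ⟨i, by omega⟩) : polySum γ u = natPolySum γ n t := by
  unfold polySum natPolySum
  rw [← Fin.sum_univ_eq_sum_range (fun i =>
    angle (γ (t (i + 1)) - γ (t i)) (γ (t (i + 2)) - γ (t (i + 1)))) n]
  refine Finset.sum_congr rfl fun i _ => ?_
  have h0 : t (i : ℕ) = u i.castSucc.castSucc := by
    rw [h (i : ℕ) (by omega)]
    exact congrArg u (Fin.ext (by simp))
  have h1 : t ((i : ℕ) + 1) = u i.castSucc.succ := by
    rw [h _ (by omega)]
    exact congrArg u (Fin.ext (by simp))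
  have h2 : t ((i : ℕ) + 2) = u i.succ.succ := by
    rw [h _ (by omega)]
    exact congrArg u (Fin.ext (by simp))
  rw [h0, h1, h2]

lemma natPolySum_mem (γ : ℝ → V) (s : Set ℝ) (n : ℕ) (t : ℕ → ℝ)
    (hmono : ∀ i j : ℕ, i < j → j ≤ n + 1 → t i < t j) (hmem : ∀ i ≤ n + 1, t i ∈ s) :
    natPolySum γ n t ∈ polySums γ s := by
  refine ⟨n, fun i => t (i : ℕ), ?_, ?_, ?_⟩
  · intro i j hij
    exact hmono i j hij (by omega)
  · intro i
    exact hmem i (by omega)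
  · exact (polySum_eq_natPolySum γ _ t (fun i hi => rfl)).symm

lemma polySums_rep (γ : ℝ → V) (s : Set ℝ) {σ : ℝ} (h : σ ∈ polySums γ s) :
    ∃ (n : ℕ) (t : ℕ → ℝ), (∀ i j : ℕ, i < j → j ≤ n + 1 → t i < t j) ∧
      (∀ i ≤ n + 1, t i ∈ s) ∧ σ = natPolySum γ n t := by
  obtain ⟨n, u, hmono, hmem, rfl⟩ := h
  refine ⟨n, fun i => u ⟨min i (n + 1), by omega⟩, ?_, ?_, ?_⟩
  · intro i j hij hj
    apply hmono
    simp only [Fin.lt_def]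
    omega
  · intro i _
    exact hmem _
  · refine polySum_eq_natPolySum γ u _ fun i hi => ?_
    congr 1
    apply Fin.ext
    simp
    omega

lemma polySums_mono (γ : ℝ → V) {s s' : Set ℝ} (h : s ⊆ s') :
    polySums γ s ⊆ polySums γ s' := by
  rintro σ ⟨n, t, h1, h2, h3⟩
  exact ⟨n, t, h1, fun i => h (h2 i), h3⟩

lemma natPolySum_concat (γ : ℝ → V) (n m : ℕ) (t s : ℕ → ℝ) :
    natPolySum γ n t + natPolySum γ m s ≤
      natPolySum γ (n + m + 2) (fun i => if i < n + 2 then t i else s (i - (n + 2))) := by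
  set u : ℕ → ℝ := fun i => if i < n + 2 then t i else s (i - (n + 2)) with hu
  have h1 : natPolySum γ n t = ∑ i ∈ Finset.range n,
      angle (γ (u (i + 1)) - γ (u i)) (γ (u (i + 2)) - γ (u (i + 1))) := by
    refine Finset.sum_congr rfl fun i hi => ?_
    simp only [Finset.mem_range] at hi
    simp only [hu]
    rw [if_pos (by omega : i < n + 2), if_pos (by omega : i + 1 < n + 2),
      if_pos (by omega : i + 2 < n + 2)]
  have h2 : natPolySum γ m s = ∑ i ∈ Finset.Ico (n + 2) (n + m + 2),
      angle (γ (u (i + 1)) - γ (u i)) (γ (u (i + 2)) - γ (u (i + 1))) := by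
    rw [Finset.sum_Ico_eq_sum_range]
    have hm : n + m + 2 - (n + 2) = m := by omega
    rw [hm]
    refine Finset.sum_congr rfl fun i hi => ?_
    have e0 : u (n + 2 + i) = s i := by
      simp only [hu]; rw [if_neg (by omega)]; congr 1; omega
    have e1 : u (n + 2 + i + 1) = s (i + 1) := by
      simp only [hu]; rw [if_neg (by omega)]; congr 1; omega
    have e2 : u (n + 2 + i + 2) = s (i + 2) := by
      simp only [hu]; rw [if_neg (by omega)]; congr 1; omega
    rw [e0, e1, e2]
  have hdisj : Disjoint (Finset.range n) (Finset.Ico (n + 2) (n + m + 2)) := by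
    rw [Finset.disjoint_left]
    intro x hx hx'
    simp only [Finset.mem_range] at hx
    simp only [Finset.mem_Ico] at hx'
    omega
  have hsub : Finset.range n ∪ Finset.Ico (n + 2) (n + m + 2) ⊆ Finset.range (n + m + 2) := by
    intro x hx
    simp only [Finset.mem_union, Finset.mem_range, Finset.mem_Ico] at hx
    simp only [Finset.mem_range]
    omega
  calc natPolySum γ n t + natPolySum γ m s
      = ∑ i ∈ Finset.range n ∪ Finset.Ico (n + 2) (n + m + 2),
          angle (γ (u (i + 1)) - γ (u i)) (γ (u (i + 2)) - γ (u (i + 1))) := by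
        rw [Finset.sum_union hdisj, h1, h2]
    _ ≤ ∑ i ∈ Finset.range (n + m + 2),
          angle (γ (u (i + 1)) - γ (u i)) (γ (u (i + 2)) - γ (u (i + 1))) :=
        Finset.sum_le_sum_of_subset_of_nonneg hsub (fun i _ _ => angle_nonneg _ _)
    _ = natPolySum γ (n + m + 2) u := rfl


lemma shrink (γ : ℝ → V) {A B a : ℝ} (hA : A ≤ a) (haB : a < B)
    (hfin : BddAbove (polySums γ (Icc A B))) {ε : ℝ} (hε : 0 < ε) :
    ∃ δ, 0 < δ ∧ a + δ ≤ B ∧ ∀ σ ∈ polySums γ (Ioc a (a + δ)), σ ≤ ε := by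
  by_contra hcon
  push_neg at hcon
  have key : ∀ k : ℕ, ∀ δ : ℝ, 0 < δ → a + δ ≤ B →
      ∃ (n : ℕ) (t : ℕ → ℝ), (∀ i j : ℕ, i < j → j ≤ n + 1 → t i < t j) ∧
        (∀ i ≤ n + 1, t i ∈ Ioc a (a + δ)) ∧ (k : ℝ) * ε ≤ natPolySum γ n t := by
    intro k
    induction k with
    | zero =>
      intro δ hδ hδB
      refine ⟨0, fun i => a + δ / 2 + i * (δ / 2), ?_, ?_, ?_⟩
      · intro i j hij hj
        have : (i : ℝ) < j := by exact_mod_cast hij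
        nlinarith
      · intro i hi
        have h1 : (i : ℝ) ≤ 1 := by exact_mod_cast hi
        have h0 : (0 : ℝ) ≤ i := Nat.cast_nonneg i
        constructor
        · nlinarith
        · nlinarith
      · simp [natPolySum]
    | succ k ih =>
      intro δ hδ hδB
      obtain ⟨σ, hσmem, hσ⟩ := hcon δ hδ hδB
      obtain ⟨m, s, hsm, hsmem, rfl⟩ := polySums_rep γ _ hσmem
      have hp : s 0 ∈ Ioc a (a + δ) := hsmem 0 (by omega)
      have hpa : a < s 0 := hp.1
      have hδ'0 : 0 < (s 0 - a) / 2 := by linarith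
      have hδ'B : a + (s 0 - a) / 2 ≤ B := by
        have := hp.2; linarith
      obtain ⟨n, t, htm, htmem, htsum⟩ := ih ((s 0 - a) / 2) hδ'0 hδ'B
      refine ⟨n + m + 2, fun i => if i < n + 2 then t i else s (i - (n + 2)), ?_, ?_, ?_⟩
      · intro i j hij hj
        dsimp only
        by_cases hi2 : i < n + 2 <;> by_cases hj2 : j < n + 2
        · rw [if_pos hi2, if_pos hj2]
          exact htm i j hij (by omega)
        · rw [if_pos hi2, if_neg hj2]
          have h1 : t i ≤ a + (s 0 - a) / 2 := (htmem i (by omega)).2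
          have h2 : s 0 ≤ s (j - (n + 2)) := by
            rcases Nat.eq_zero_or_pos (j - (n + 2)) with h0 | h0
            · rw [h0]
            · exact (hsm 0 _ h0 (by omega)).le
          linarith
        · omega
        · rw [if_neg hi2, if_neg hj2]
          exact hsm _ _ (by omega) (by omega)
      · intro i hi
        dsimp only
        by_cases hi2 : i < n + 2
        · rw [if_pos hi2]
          have h1 := htmem i (by omega)
          refine ⟨h1.1, ?_⟩
          have := h1.2
          have := hp.2
          linarith
        · rw [if_neg hi2]
          exact hsmem _ (by omega)
      · have hcct := natPolySum_concat γ n m t s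
        push_cast
        calc ((k : ℝ) + 1) * ε = (k : ℝ) * ε + ε := by ring
          _ ≤ natPolySum γ n t + natPolySum γ m s := add_le_add htsum hσ.le
          _ ≤ _ := hcct
  obtain ⟨M, hM⟩ := hfin
  obtain ⟨k, hk⟩ := exists_nat_gt (M / ε)
  have hδ0 : (0 : ℝ) < B - a := by linarith
  obtain ⟨n, t, h1, h2, h3⟩ := key k (B - a) hδ0 (by linarith)
  have hmem : natPolySum γ n t ∈ polySums γ (Icc A B) := by
    refine polySums_mono γ ?_ (natPolySum_mem γ _ n t h1 h2)
    intro x hx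
    exact ⟨le_trans hA hx.1.le, by linarith [hx.2]⟩
  have hle : (k : ℝ) * ε ≤ M := le_trans h3 (hM hmem)
  have hlt : M < (k : ℝ) * ε := (div_lt_iff₀ hε).mp hk
  linarith
end AuxPoly

section Main

open InnerProductGeometry

variable {V : Type*} [NormedAddCommGroup V] [InnerProductSpace ℝ V] [CompleteSpace V]

lemma tangent_right {A B : ℝ} (hAB : A < B) (γ : ℝ → V)
    (hcont : ContinuousOn γ (Set.Icc A B)) (hinj : Set.InjOn γ (Set.Icc A B))
    (hfin : BddAbove (polySums γ (Set.Icc A B))) {a : ℝ} (ha : a ∈ Set.Ico A B) :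
    ∃ T : V, Filter.Tendsto (fun q : ℝ × ℝ => ‖γ q.2 - γ q.1‖⁻¹ • (γ q.2 - γ q.1))
      (nhdsWithin (a, a) {q : ℝ × ℝ | a ≤ q.1 ∧ q.1 < q.2 ∧ q.2 ≤ B}) (nhds T) := by
  obtain ⟨hAa, haB⟩ := ha
  set S : Set (ℝ × ℝ) := {q : ℝ × ℝ | a ≤ q.1 ∧ q.1 < q.2 ∧ q.2 ≤ B} with hS
  set f : ℝ × ℝ → V := fun q => ‖γ q.2 - γ q.1‖⁻¹ • (γ q.2 - γ q.1) with hf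
  set L := nhdsWithin (a, a) S with hL
  have hne : L.NeBot := by
    rw [hL, ← mem_closure_iff_nhdsWithin_neBot]
    have h1 : Filter.Tendsto (fun e : ℝ => ((a : ℝ), a + e)) (nhdsWithin 0 (Ioi 0))
        (nhds (a, a)) := by
      have h2 : Filter.Tendsto (fun e : ℝ => ((a : ℝ), a + e)) (nhds 0) (nhds (a, a + 0)) :=
        ((continuous_const.prodMk (continuous_const.add continuous_id)).tendsto 0)
      rw [add_zero] at h2
      exact h2.mono_left nhdsWithin_le_nhds
    refine mem_closure_of_tendsto h1 ?_
    filter_upwards [Ioc_mem_nhdsGT_of_mem (⟨le_refl (0:ℝ), (show (0:ℝ) < B - a by linarith)⟩ :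
      (0:ℝ) ∈ Set.Ico (0:ℝ) (B - a))] with e he
    exact ⟨le_refl a, show a < a + e by linarith [he.1], show a + e ≤ B by linarith [he.2]⟩
  have hchord : ∀ x y : ℝ, A ≤ x → x < y → y ≤ B → γ y - γ x ≠ 0 := by
    intro x y h1 h2 h3 h0
    rw [sub_eq_zero] at h0
    have := hinj ⟨by linarith, h3⟩ ⟨h1, by linarith⟩ h0
    linarith
  have hCauchy : Cauchy (Filter.map f L) := by
    rw [Metric.cauchy_iff]
    refine ⟨Filter.map_neBot, fun ε hε => ?_⟩
    obtain ⟨d, hd0, hdB, hbound⟩ := shrink γ hAa haB hfin (show (0:ℝ) < ε/8 by linarith)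
    set z := a + d / 2 with hz
    set w := a + d with hw
    have hza : a < z := by rw [hz]; linarith
    have hzw : z < w := by rw [hz, hw]; linarith
    have hwB : w ≤ B := hdB
    set v := ‖γ w - γ z‖⁻¹ • (γ w - γ z) with hv
    have key' : ∀ x y : ℝ, a < x → x < y → y < z → dist (f (x, y)) v ≤ ε / 8 := by
      intro x y hax hxy hyz
      set t : ℕ → ℝ := fun i => if i = 0 then x else if i = 1 then y else if i = 2 then z else w
        with ht
      have hmem : natPolySum γ 2 t ∈ polySums γ (Ioc a (a + d)) := by
        apply natPolySum_mem
        · intro i j hij hj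
          have hi3 : i ≤ 3 := by omega
          interval_cases i <;> interval_cases j <;> simp only [ht] <;> norm_num <;> linarith
        · intro i hi
          have hx' : x ∈ Ioc a (a + d) := ⟨hax, by linarith⟩
          have hy' : y ∈ Ioc a (a + d) := ⟨by linarith, by linarith⟩
          have hz' : z ∈ Ioc a (a + d) := ⟨by linarith, by linarith⟩
          have hw' : w ∈ Ioc a (a + d) := ⟨by linarith, by rw [hw]⟩
          interval_cases i <;> simp only [ht] <;> norm_num <;> first | assumption | linarith [hw'.1]
      have hsum : natPolySum γ 2 t =
          angle (γ y - γ x) (γ z - γ y) + angle (γ z - γ y) (γ w - γ z) := by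
        unfold natPolySum
        rw [Finset.sum_range_succ, Finset.sum_range_one]
        norm_num [ht]
      have hb2 : angle (γ y - γ x) (γ z - γ y) + angle (γ z - γ y) (γ w - γ z) ≤ ε / 8 := by
        rw [← hsum]; exact hbound _ hmem
      have htri : angle (γ y - γ x) (γ w - γ z) ≤ ε / 8 :=
        le_trans (my_angle_triangle _ (γ z - γ y) _) hb2
      have hc1 : γ y - γ x ≠ 0 := hchord x y (by linarith) hxy (by linarith)
      have hc2 : γ w - γ z ≠ 0 := hchord z w (by linarith) hzw hwB
      have hnn := norm_normalized_sub_le (γ y - γ x) (γ w - γ z) hc1 hc2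
      rw [dist_eq_norm]
      exact le_trans hnn htri
  -- y ≤ B needed above: y < z = a + d/2 ≤ B fine
    have key2 : ∀ x y : ℝ, a ≤ x → x < y → y < z → dist (f (x, y)) v ≤ ε / 8 := by
      intro x y hax hxy hyz
      rcases hax.eq_or_lt with rfl | h
      · -- x = a : take limits
        have hyB : y ≤ B := by linarith
        have hcA : Filter.Tendsto γ (nhdsWithin a (Ioi a)) (nhds (γ a)) := by
          have h1 : Filter.Tendsto γ (nhdsWithin a (Icc A B)) (nhds (γ a)) :=
            hcont a ⟨hAa, haB.le⟩
          refine h1.mono_left ?_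
          rw [nhdsWithin_restrict' (s := Ioi a) (Iic_mem_nhds haB)]
          exact nhdsWithin_mono _ (fun u hu => ⟨le_trans hAa hu.1.le, hu.2⟩)
        have hc0 : γ y - γ a ≠ 0 := hchord a y hAa (by linarith) hyB
        have h1 : Filter.Tendsto (fun x' => γ y - γ x') (nhdsWithin a (Ioi a))
            (nhds (γ y - γ a)) := tendsto_const_nhds.sub hcA
        have hlim : Filter.Tendsto (fun x' => f (x', y)) (nhdsWithin a (Ioi a))
            (nhds (f (a, y))) :=
          (h1.norm.inv₀ (norm_ne_zero_iff.mpr hc0)).smul h1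
        have hev : ∀ᶠ x' in nhdsWithin a (Ioi a), dist (f (x', y)) v ≤ ε / 8 := by
          filter_upwards [Ioo_mem_nhdsGT_of_mem (⟨le_refl a, hxy⟩ : a ∈ Set.Ico a y)]
            with x' hx'
          exact key' x' y hx'.1 hx'.2 hyz
        exact le_of_tendsto (hlim.dist tendsto_const_nhds) hev
      · exact key' x y h hxy hyz
    refine ⟨f '' (S ∩ {q : ℝ × ℝ | q.2 < z}), Filter.image_mem_map ?_, ?_⟩
    · exact Filter.inter_mem self_mem_nhdsWithin
        (mem_nhdsWithin_of_mem_nhds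
          ((isOpen_lt continuous_snd continuous_const).mem_nhds (by simpa using hza)))
    · rintro u ⟨p, hp, rfl⟩ u' ⟨q, hq, rfl⟩
      have h1 := key2 p.1 p.2 hp.1.1 hp.1.2.1 hp.2
      have h2 := key2 q.1 q.2 hq.1.1 hq.1.2.1 hq.2
      calc dist (f p) (f q) ≤ dist (f p) v + dist v (f q) := dist_triangle _ _ _
        _ ≤ ε / 8 + ε / 8 := by
            rw [dist_comm v]
            exact add_le_add (by simpa using h1) (by simpa using h2)
        _ < ε := by linarith
  obtain ⟨T, hT⟩ := CompleteSpace.complete hCauchy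
  exact ⟨T, hT⟩

end Main

section Reflect

open InnerProductGeometry

variable {V : Type*} [NormedAddCommGroup V] [InnerProductSpace ℝ V]

lemma polySums_reflect (γ : ℝ → V) (A B : ℝ) :
    polySums (fun u => γ (A + B - u)) (Set.Icc A B) ⊆ polySums γ (Set.Icc A B) := by
  intro σ hσ
  obtain ⟨m, s, hsm, hsmem, rfl⟩ := polySums_rep _ _ hσ
  set δ : ℝ → V := fun u => γ (A + B - u) with hδ
  set t : ℕ → ℝ := fun i => A + B - s (m + 1 - i) with ht
  have hmem2 : ∀ i ≤ m + 1, t i ∈ Set.Icc A B := by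
    intro i hi
    have h := hsmem (m + 1 - i) (by omega)
    simp only [ht]
    exact ⟨by linarith [h.2], by linarith [h.1]⟩
  have hmono2 : ∀ i j : ℕ, i < j → j ≤ m + 1 → t i < t j := by
    intro i j hij hj
    have h := hsm (m + 1 - j) (m + 1 - i) (by omega) (by omega)
    simp only [ht]
    linarith
  have heq : natPolySum γ m t = natPolySum δ m s := by
    unfold natPolySum
    rw [← Finset.sum_range_reflect]
    refine Finset.sum_congr rfl fun i hi => ?_
    simp only [Finset.mem_range] at hi
    have h1 : m - 1 - i + 1 = m - i := by omega
    have h2 : m - 1 - i + 2 = m + 1 - i := by omega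
    have h3 : m + 1 - (m - 1 - i) = i + 2 := by omega
    have h4 : m + 1 - (m - i) = i + 1 := by omega
    have h5 : m + 1 - (m + 1 - i) = i := by omega
    simp only [ht, h1, h2, h3, h4, h5]
    have e1 : δ (s i) = γ (A + B - s i) := rfl
    have e2 : δ (s (i + 1)) = γ (A + B - s (i + 1)) := rfl
    have e3 : δ (s (i + 2)) = γ (A + B - s (i + 2)) := rfl
    rw [e1, e2, e3]
    set P := γ (A + B - s i)
    set Q := γ (A + B - s (i + 1))
    set R := γ (A + B - s (i + 2))
    rw [show Q - R = -(R - Q) by abel, show P - Q = -(Q - P) by abel, angle_neg_neg,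
      angle_comm]
  rw [← heq]
  exact natPolySum_mem γ _ m t hmono2 hmem2

end Reflect


/-- Existence of strong one-sided tangents: if `γ : [A,B] → ℝ^N` is an injective continuous
curve of finite total curvature, then for every `a ∈ [A,B)` the strong right tangent
`T⁺(a) = lim_{a ≤ x < y, y → a} (γ y - γ x)/‖γ y - γ x‖` exists, and for every `b ∈ (A,B]`
the strong left tangent `T₋(b) = lim_{x < y ≤ b, x → b} (γ y - γ x)/‖γ y - γ x‖` exists. -/
theorem strong_one_sided_tangents_exist {N : ℕ} (A B : ℝ) (hAB : A < B)
    (γ : ℝ → EuclideanSpace ℝ (Fin N))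
    (hcont : ContinuousOn γ (Set.Icc A B))
    (hinj : Set.InjOn γ (Set.Icc A B))
    (hfin : BddAbove (polySums γ (Set.Icc A B))) :
    (∀ a ∈ Set.Ico A B, ∃ T : EuclideanSpace ℝ (Fin N),
      Filter.Tendsto (fun q : ℝ × ℝ => ‖γ q.2 - γ q.1‖⁻¹ • (γ q.2 - γ q.1))
        (nhdsWithin (a, a) {q : ℝ × ℝ | a ≤ q.1 ∧ q.1 < q.2 ∧ q.2 ≤ B})
        (nhds T)) ∧
    (∀ b ∈ Set.Ioc A B, ∃ T : EuclideanSpace ℝ (Fin N),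
      Filter.Tendsto (fun q : ℝ × ℝ => ‖γ q.2 - γ q.1‖⁻¹ • (γ q.2 - γ q.1))
        (nhdsWithin (b, b) {q : ℝ × ℝ | A ≤ q.1 ∧ q.1 < q.2 ∧ q.2 ≤ b})
        (nhds T)) := by
  constructor
  · intro a ha
    exact tangent_right hAB γ hcont hinj hfin ha
  · intro b hb
    set δf : ℝ → EuclideanSpace ℝ (Fin N) := fun u => γ (A + B - u) with hδf
    have hrefl : Continuous (fun u : ℝ => A + B - u) := by continuity
    have hmaps : ∀ u ∈ Set.Icc A B, A + B - u ∈ Set.Icc A B := by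
      intro u hu
      exact ⟨by linarith [hu.2], by linarith [hu.1]⟩
    have hcont' : ContinuousOn δf (Set.Icc A B) :=
      hcont.comp hrefl.continuousOn hmaps
    have hinj' : Set.InjOn δf (Set.Icc A B) := by
      intro u hu v hv h
      have := hinj (hmaps u hu) (hmaps v hv) h
      linarith
    have hfin' : BddAbove (polySums δf (Set.Icc A B)) :=
      hfin.mono (polySums_reflect γ A B)
    have ha : A + B - b ∈ Set.Ico A B := ⟨by linarith [hb.2], by linarith [hb.1]⟩
    obtain ⟨T, hT⟩ := tangent_right hAB δf hcont' hinj' hfin' ha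
    refine ⟨-T, ?_⟩
    set a := A + B - b with hab
    set r : ℝ × ℝ → ℝ × ℝ := fun q => (A + B - q.2, A + B - q.1) with hr
    have hrt : Filter.Tendsto r
        (nhdsWithin (b, b) {q : ℝ × ℝ | A ≤ q.1 ∧ q.1 < q.2 ∧ q.2 ≤ b})
        (nhdsWithin (a, a) {q : ℝ × ℝ | a ≤ q.1 ∧ q.1 < q.2 ∧ q.2 ≤ B}) := by
      apply tendsto_nhdsWithin_of_tendsto_nhds_of_eventually_within
      · have hcR : Continuous r := by
          apply Continuous.prodMk
          · exact continuous_const.sub continuous_snd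
          · exact continuous_const.sub continuous_fst
        have := hcR.tendsto (b, b)
        have hrbb : r (b, b) = (a, a) := rfl
        rw [hrbb] at this
        exact this.mono_left nhdsWithin_le_nhds
      · filter_upwards [self_mem_nhdsWithin] with q hq
        exact ⟨by linarith [hq.2.2], by linarith [hq.2.1], by linarith [hq.1]⟩
    have hcomp := (hT.comp hrt).neg
    refine hcomp.congr' ?_
    filter_upwards [self_mem_nhdsWithin] with q hq
    have e1 : A + B - (A + B - q.1) = q.1 := by ring
    have e2 : A + B - (A + B - q.2) = q.2 := by ring
    show -((fun p : ℝ × ℝ => ‖δf p.2 - δf p.1‖⁻¹ • (δf p.2 - δf p.1)) (r q)) = _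
    simp only [hr, hδf]
    rw [e1, e2]
    rw [show γ q.1 - γ q.2 = -(γ q.2 - γ q.1) by abel, norm_neg, smul_neg, neg_neg]
end

section
/- Let Γ be a closed polygonal (or piecewise linear) curve in ℝ^N and p a point not on Γ. Then the length of the radial projection Π_p(Γ) onto the unit sphere centered at p is at most the total curvature of Γ, where Π_p(x) = p + (x-p)/‖x-p‖. -/
set_option maxHeartbeats 1000000

open Set Filter

section Aux

open Real InnerProductGeometry

variable {F : Type*} [NormedAddCommGroup F] [InnerProductSpace ℝ F]

local notation "⟪" x ", " y "⟫" => @inner ℝ _ _ x y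

lemma cos_angle_add_angle_le_inner {u v w : F} (hu : ‖u‖ = 1) (hv : ‖v‖ = 1) (hw : ‖w‖ = 1) :
    Real.cos (angle u v + angle v w) ≤ ⟪u, w⟫ := by
  set c1 : ℝ := ⟪u, v⟫ with hc1
  set c2 : ℝ := ⟪v, w⟫ with hc2
  have hcos1 : Real.cos (angle u v) = c1 := by
    rw [cos_angle, hu, hv]; simp [hc1]
  have hcos2 : Real.cos (angle v w) = c2 := by
    rw [cos_angle, hv, hw]; simp [hc2]
  have hsin1 : Real.sin (angle u v) = Real.sqrt (1 - c1 ^ 2) := by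
    rw [Real.sin_eq_sqrt_one_sub_cos_sq (angle_nonneg _ _) (angle_le_pi _ _), hcos1]
  have hsin2 : Real.sin (angle v w) = Real.sqrt (1 - c2 ^ 2) := by
    rw [Real.sin_eq_sqrt_one_sub_cos_sq (angle_nonneg _ _) (angle_le_pi _ _), hcos2]
  have hvv : ⟪v, v⟫ = (1 : ℝ) := by
    rw [real_inner_self_eq_norm_sq, hv]; norm_num
  have hvu : ⟪v, u⟫ = c1 := by rw [hc1, real_inner_comm]
  set u' : F := u - c1 • v with hu'
  set w' : F := w - c2 • v with hw'
  have hinner : ⟪u', w'⟫ = ⟪u, w⟫ - c1 * c2 := by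
    simp only [hu', hw', inner_sub_left, inner_sub_right, real_inner_smul_left,
      real_inner_smul_right, hvv, hvu, ← hc2]
    ring
  have hnu : ‖u'‖ ^ 2 = 1 - c1 ^ 2 := by
    rw [hu', norm_sub_sq_real, real_inner_smul_right, norm_smul, hu, hv, ← hc1]
    simp [sq_abs]
    ring
  have hnw : ‖w'‖ ^ 2 = 1 - c2 ^ 2 := by
    rw [hw', norm_sub_sq_real, real_inner_smul_right, norm_smul, hw, hv, hc2,
      real_inner_comm v w]
    simp [sq_abs, Real.norm_eq_abs]
    ring
  have hCS : |⟪u', w'⟫| ≤ ‖u'‖ * ‖w'‖ := abs_real_inner_le_norm u' w'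
  have hprod : ‖u'‖ * ‖w'‖ = Real.sqrt (1 - c1 ^ 2) * Real.sqrt (1 - c2 ^ 2) := by
    rw [← hnu, ← hnw, Real.sqrt_sq (norm_nonneg _), Real.sqrt_sq (norm_nonneg _)]
  rw [hinner, hprod] at hCS
  rw [Real.cos_add, hcos1, hcos2, hsin1, hsin2]
  linarith [(abs_le.1 hCS).1]

/-- The triangle inequality for the unoriented angle between vectors. -/
lemma angle_triangle' (x y z : F) : angle x z ≤ angle x y + angle y z := by
  rcases eq_or_ne x 0 with rfl | hx
  · rw [angle_zero_left, angle_zero_left]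
    linarith [angle_nonneg y z]
  rcases eq_or_ne z 0 with rfl | hz
  · rw [angle_zero_right, angle_zero_right]
    linarith [angle_nonneg x y]
  rcases eq_or_ne y 0 with rfl | hy
  · rw [angle_zero_right, angle_zero_left]
    linarith [angle_le_pi x z]
  set u := ‖x‖⁻¹ • x with hu
  set v := ‖y‖⁻¹ • y with hv
  set w := ‖z‖⁻¹ • z with hw
  have hnu : ‖u‖ = 1 := norm_smul_inv_norm hx
  have hnv : ‖v‖ = 1 := norm_smul_inv_norm hy
  have hnw : ‖w‖ = 1 := norm_smul_inv_norm hz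
  have hxp : (0:ℝ) < ‖x‖⁻¹ := inv_pos.2 (norm_pos_iff.2 hx)
  have hyp : (0:ℝ) < ‖y‖⁻¹ := inv_pos.2 (norm_pos_iff.2 hy)
  have hzp : (0:ℝ) < ‖z‖⁻¹ := inv_pos.2 (norm_pos_iff.2 hz)
  have e1 : angle u w = angle x z := by
    rw [hu, hw, angle_smul_left_of_pos _ _ hxp, angle_smul_right_of_pos _ _ hzp]
  have e2 : angle u v = angle x y := by
    rw [hu, hv, angle_smul_left_of_pos _ _ hxp, angle_smul_right_of_pos _ _ hyp]
  have e3 : angle v w = angle y z := by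
    rw [hv, hw, angle_smul_left_of_pos _ _ hyp, angle_smul_right_of_pos _ _ hzp]
  clear_value u v w
  rw [← e1, ← e2, ← e3]
  rcases le_or_gt (angle u v + angle v w) π with hle | hgt
  · by_contra hcon
    push_neg at hcon
    have h1 : Real.cos (angle u w) < Real.cos (angle u v + angle v w) :=
      Real.strictAntiOn_cos
        ⟨add_nonneg (angle_nonneg _ _) (angle_nonneg _ _), hle⟩
        ⟨angle_nonneg _ _, angle_le_pi _ _⟩ hcon
    have h2 := cos_angle_add_angle_le_inner hnu hnv hnw
    have h3 : Real.cos (angle u w) = ⟪u, w⟫ := by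
      rw [cos_angle, hnu, hnw]; simp
    linarith
  · linarith [angle_le_pi u w]

lemma inner_combo {e1 e2 : F} (h1 : ‖e1‖ = 1) (h2 : ‖e2‖ = 1) (h12 : ⟪e1, e2⟫ = 0)
    (x y x' y' : ℝ) : ⟪x • e1 + y • e2, x' • e1 + y' • e2⟫ = x * x' + y * y' := by
  have he1 : ⟪e1, e1⟫ = (1:ℝ) := by rw [real_inner_self_eq_norm_sq, h1]; norm_num
  have he2 : ⟪e2, e2⟫ = (1:ℝ) := by rw [real_inner_self_eq_norm_sq, h2]; norm_num
  have h21 : ⟪e2, e1⟫ = (0:ℝ) := by rw [real_inner_comm]; exact h12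
  simp [inner_add_left, inner_add_right, real_inner_smul_left, real_inner_smul_right,
    he1, he2, h12, h21]
  rw [h1, h2]; ring

lemma norm_combo {e1 e2 : F} (h1 : ‖e1‖ = 1) (h2 : ‖e2‖ = 1) (h12 : ⟪e1, e2⟫ = 0)
    (x y : ℝ) : ‖x • e1 + y • e2‖ = Real.sqrt (x ^ 2 + y ^ 2) := by
  rw [← Real.sqrt_sq (norm_nonneg (x • e1 + y • e2)), ← real_inner_self_eq_norm_sq,
    inner_combo h1 h2 h12]
  ring_nf

lemma lipschitz_circle {e1 e2 : F} (h1 : ‖e1‖ = 1) (h2 : ‖e2‖ = 1) (h12 : ⟪e1, e2⟫ = 0)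
    (p : F) : LipschitzWith 1 (fun θ : ℝ => p + (Real.cos θ • e1 + Real.sin θ • e2)) := by
  rw [lipschitzWith_iff_dist_le_mul]
  intro a b
  rw [dist_eq_norm]
  have : p + (Real.cos a • e1 + Real.sin a • e2) - (p + (Real.cos b • e1 + Real.sin b • e2))
      = (Real.cos a - Real.cos b) • e1 + (Real.sin a - Real.sin b) • e2 := by
    rw [sub_smul, sub_smul]; abel
  rw [this, norm_combo h1 h2 h12]
  have key : (Real.cos a - Real.cos b) ^ 2 + (Real.sin a - Real.sin b) ^ 2 ≤ (a - b) ^ 2 := by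
    have hc : Real.cos a * Real.cos b + Real.sin a * Real.sin b = Real.cos (a - b) := by
      rw [Real.cos_sub]
    have hb := Real.one_sub_sq_div_two_le_cos (x := a - b)
    nlinarith [Real.sin_sq_add_cos_sq a, Real.sin_sq_add_cos_sq b]
  calc Real.sqrt ((Real.cos a - Real.cos b) ^ 2 + (Real.sin a - Real.sin b) ^ 2)
      ≤ Real.sqrt ((a - b) ^ 2) := Real.sqrt_le_sqrt key
    _ = |a - b| := Real.sqrt_sq_eq_abs _
    _ = 1 * dist a b := by rw [one_mul, Real.dist_eq]

lemma edge_bound (a b p : F) (hd : b - a ≠ 0)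
    (hp : ∀ s ∈ Set.Icc (0:ℝ) 1, a + s • (b - a) ≠ p) :
    eVariationOn (fun s : ℝ => p + ‖(a + s • (b - a)) - p‖⁻¹ • ((a + s • (b - a)) - p))
      (Set.Icc 0 1) ≤ ENNReal.ofReal (angle (a - p) (b - p)) := by
  have hnd : (0:ℝ) < ‖b - a‖ := norm_pos_iff.2 hd
  set d : F := b - a with hdd
  set w : ℝ → F := fun s => (a - p) + s • d with hwdef
  have hrew : ∀ s : ℝ, (a + s • (b - a)) - p = w s := by
    intro s; rw [hwdef]; simp only [← hdd]; abel
  have hfun : (fun s : ℝ => p + ‖(a + s • (b - a)) - p‖⁻¹ • ((a + s • (b - a)) - p))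
      = fun s : ℝ => p + ‖w s‖⁻¹ • w s := by
    funext s; rw [hrew s]
  rw [hfun]
  have hw0 : ∀ s ∈ Set.Icc (0:ℝ) 1, w s ≠ 0 := by
    intro s hs h0
    exact hp s hs (by rw [← sub_eq_zero, hrew s]; exact h0)
  set s₀ : ℝ := -(⟪a - p, d⟫) / ‖d‖ ^ 2 with hs₀
  set m : F := (a - p) + s₀ • d with hmdef
  have hm : ⟪m, d⟫ = (0:ℝ) := by
    rw [hmdef, inner_add_left, real_inner_smul_left, hs₀, real_inner_self_eq_norm_sq]
    field_simp
    ring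
  have hwm : ∀ s : ℝ, w s = m + (s - s₀) • d := by
    intro s; rw [hwdef, hmdef, sub_smul]; abel
  have ha0 : a - p = w 0 := by rw [hwdef]; simp
  have hb1 : b - p = w 1 := by rw [hwdef]; simp only [one_smul, hdd]; abel
  rcases eq_or_ne m 0 with hm0 | hm0
  · -- p on the line: projection constant
    have hws : ∀ s, w s = (s - s₀) • d := by intro s; rw [hwm, hm0, zero_add]
    have hcase : s₀ < 0 ∨ 1 < s₀ := by
      rcases lt_or_ge s₀ 0 with h | h
      · exact Or.inl h
      rcases le_or_gt s₀ 1 with h' | h'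
      · exact absurd (by rw [hws]; simp) (hw0 s₀ ⟨h, h'⟩)
      · exact Or.inr h'
    have hposcalc : ∀ x : ℝ, 0 < x → (|x| * ‖d‖)⁻¹ * x = ‖d‖⁻¹ := by
      intro x hx
      rw [abs_of_pos hx, mul_inv]
      field_simp
    have hnegcalc : ∀ x : ℝ, x < 0 → (|x| * ‖d‖)⁻¹ * x = -‖d‖⁻¹ := by
      intro x hx
      rw [abs_of_neg hx, mul_inv, inv_neg]
      field_simp
      rw [div_self hx.ne]
    have key : ∀ s ∈ Set.Icc (0:ℝ) 1, ‖w s‖⁻¹ • w s =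
        (if s₀ < 0 then ‖d‖⁻¹ else -‖d‖⁻¹) • d := by
      intro s hs
      rw [hws, norm_smul, Real.norm_eq_abs, smul_smul]
      congr 1
      rcases hcase with h | h
      · rw [if_pos h]
        exact hposcalc _ (by have := hs.1; linarith)
      · rw [if_neg (by linarith [hs.1, hs.2] : ¬ s₀ < 0)]
        exact hnegcalc _ (by have := hs.2; linarith)
    have hconst : eVariationOn (fun s : ℝ => p + ‖w s‖⁻¹ • w s) (Set.Icc 0 1) = 0 := by
      apply eVariationOn.constant_on
      rintro x ⟨s, hs, rfl⟩ y ⟨t, ht, rfl⟩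
      simp only [key s hs, key t ht]
    rw [hconst]
    exact zero_le
  · -- p off the line
    have hr : (0:ℝ) < ‖m‖ := norm_pos_iff.2 hm0
    set r : ℝ := ‖m‖ with hrdef
    set e1 : F := r⁻¹ • m with he1def
    set e2 : F := ‖d‖⁻¹ • d with he2def
    have he1 : ‖e1‖ = 1 := norm_smul_inv_norm hm0
    have he2 : ‖e2‖ = 1 := norm_smul_inv_norm hd
    have h12 : ⟪e1, e2⟫ = (0:ℝ) := by
      rw [he1def, he2def, real_inner_smul_left, real_inner_smul_right, hm]
      ring
    set t : ℝ → ℝ := fun s => (s - s₀) * ‖d‖ with htdef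
    have hwe : ∀ s, w s = r • e1 + t s • e2 := by
      intro s
      rw [hwm, he1def, he2def, smul_smul, smul_smul, hrdef]
      rw [mul_inv_cancel₀ (ne_of_gt hr), one_smul, htdef]
      rw [mul_assoc, mul_inv_cancel₀ (ne_of_gt hnd), mul_one]
    set φ : ℝ → ℝ := fun s => Real.arctan (t s / r) with hφdef
    set f : ℝ → F := fun θ => p + (Real.cos θ • e1 + Real.sin θ • e2) with hfdef
    clear_value e1 e2 t φ f r m w s₀ d
    have hRpos : ∀ s, (0:ℝ) < Real.sqrt (r ^ 2 + t s ^ 2) := by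
      intro s; apply Real.sqrt_pos.2; positivity
    have hsq : ∀ s, Real.sqrt (1 + (t s / r) ^ 2) = Real.sqrt (r ^ 2 + t s ^ 2) / r := by
      intro s
      rw [show 1 + (t s / r) ^ 2 = (r ^ 2 + t s ^ 2) / r ^ 2 by field_simp [hr.ne'],
        Real.sqrt_div (by positivity), Real.sqrt_sq hr.le]
    have hcos : ∀ s, Real.cos (φ s) = r / Real.sqrt (r ^ 2 + t s ^ 2) := by
      intro s
      rw [hφdef, Real.cos_arctan, hsq s, one_div_div]
    have hsin : ∀ s, Real.sin (φ s) = t s / Real.sqrt (r ^ 2 + t s ^ 2) := by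
      intro s
      rw [hφdef, Real.sin_arctan, hsq s]
      rw [div_div_div_cancel_right₀]
      exact hr.ne'
    have hfφ : ∀ s, p + ‖w s‖⁻¹ • w s = f (φ s) := by
      intro s
      rw [hwe s, norm_combo he1 he2 h12, hfdef]
      dsimp only
      congr 1
      rw [smul_add, smul_smul, smul_smul, hcos s, hsin s, div_eq_inv_mul, div_eq_inv_mul]
    have hfeq : (fun s : ℝ => p + ‖w s‖⁻¹ • w s) = f ∘ φ := funext fun s => hfφ s
    have hlip : LipschitzWith 1 f := by
      rw [hfdef]; exact lipschitz_circle he1 he2 h12 p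
    have hmono : MonotoneOn φ (Set.Icc 0 1) := by
      intro x _ y _ hxy
      simp only [hφdef]
      apply Real.arctan_strictMono.monotone
      apply (div_le_div_iff_of_pos_right hr).2
      rw [htdef]
      exact mul_le_mul_of_nonneg_right (by linarith) hnd.le
    have hvar : eVariationOn φ (Set.Icc 0 1) ≤ ENNReal.ofReal (φ 1 - φ 0) := by
      have h := hmono.eVariationOn_le (Set.left_mem_Icc.2 zero_le_one)
        (Set.right_mem_Icc.2 zero_le_one)
      rwa [Set.inter_self] at h
    have hwpos : ∀ s, (0:ℝ) < ‖w s‖ := by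
      intro s
      rw [hwe s, norm_combo he1 he2 h12]
      exact hRpos s
    have hangle : φ 1 - φ 0 = angle (a - p) (b - p) := by
      rw [ha0, hb1]
      have husmul : ∀ s, w s = ‖w s‖ • (Real.cos (φ s) • e1 + Real.sin (φ s) • e2) := by
        intro s
        have h := hfφ s
        rw [hfdef] at h
        have h' : ‖w s‖⁻¹ • w s = Real.cos (φ s) • e1 + Real.sin (φ s) • e2 :=
          add_left_cancel h
        rw [← h', smul_inv_smul₀ (ne_of_gt (hwpos s))]
      rw [husmul 0, husmul 1, angle_smul_left_of_pos _ _ (hwpos 0),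
        angle_smul_right_of_pos _ _ (hwpos 1)]
      have hn0 : ‖Real.cos (φ 0) • e1 + Real.sin (φ 0) • e2‖ = 1 := by
        rw [norm_combo he1 he2 h12, Real.cos_sq_add_sin_sq, Real.sqrt_one]
      have hn1 : ‖Real.cos (φ 1) • e1 + Real.sin (φ 1) • e2‖ = 1 := by
        rw [norm_combo he1 he2 h12, Real.cos_sq_add_sin_sq, Real.sqrt_one]
      have hφ01 : 0 ≤ φ 1 - φ 0 :=
        sub_nonneg.2 (hmono (Set.left_mem_Icc.2 zero_le_one)
          (Set.right_mem_Icc.2 zero_le_one) zero_le_one)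
      have hφpi : φ 1 - φ 0 ≤ π := by
        have h1 := Real.arctan_lt_pi_div_two (t 1 / r)
        have h0 := Real.neg_pi_div_two_lt_arctan (t 0 / r)
        rw [hφdef]
        dsimp only
        linarith
      apply Real.injOn_cos ⟨hφ01, hφpi⟩ ⟨angle_nonneg _ _, angle_le_pi _ _⟩
      rw [cos_angle, hn0, hn1, inner_combo he1 he2 h12, Real.cos_sub]
      ring
    rw [hfeq]
    calc eVariationOn (f ∘ φ) (Set.Icc 0 1)
        ≤ ((1 : NNReal) : ENNReal) * eVariationOn φ (Set.Icc 0 1) :=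
          LipschitzOnWith.comp_eVariationOn_le
            (hlip.lipschitzOnWith (s := Set.univ)) (Set.mapsTo_univ _ _)
      _ = eVariationOn φ (Set.Icc 0 1) := by rw [ENNReal.coe_one, one_mul]
      _ ≤ ENNReal.ofReal (φ 1 - φ 0) := hvar
      _ = ENNReal.ofReal (angle (a - p) (b - p)) := by rw [hangle]

end Aux

open Real InnerProductGeometry in
/-- Radial projection of a closed polygon: let `v 0, v 1, …` (cyclically indexed by
`Fin (n+3)`, so there are at least three vertices) be the vertices of a closed polygonal
curve in `ℝ^N` with nondegenerate edges, and let `p` be a point not on the polygon.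
Then the length of the radial projection of the polygon to the unit sphere centered at `p`
(the sum over the edges of the variation of the projected edge path, i.e. length counted
with multiplicity) is at most the total curvature of the polygon (the sum of the exterior
angles at its vertices). -/
theorem length_radial_projection_le_totalCurvature_polygon {N : ℕ} (n : ℕ)
    (v : Fin (n + 3) → EuclideanSpace ℝ (Fin N))
    (hedge : ∀ i, v (i + 1) ≠ v i)
    (p : EuclideanSpace ℝ (Fin N))
    (hp : ∀ i, ∀ s ∈ Set.Icc (0 : ℝ) 1, v i + s • (v (i + 1) - v i) ≠ p) :
    ∑ i : Fin (n + 3),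
        eVariationOn
          (fun s : ℝ =>
            p + ‖(v i + s • (v (i + 1) - v i)) - p‖⁻¹ • ((v i + s • (v (i + 1) - v i)) - p))
          (Set.Icc 0 1) ≤
      ENNReal.ofReal
        (∑ i : Fin (n + 3),
          InnerProductGeometry.angle (v (i + 1) - v i) (v (i + 1 + 1) - v (i + 1))) := by
  classical
  have hvne : ∀ i : Fin (n + 3), v i - p ≠ 0 := by
    intro i
    have h := hp i 0 ⟨le_refl 0, zero_le_one⟩
    rw [zero_smul, add_zero] at h
    exact sub_ne_zero.2 h
  have step1 : ∀ i : Fin (n + 3),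
      eVariationOn
        (fun s : ℝ =>
          p + ‖(v i + s • (v (i + 1) - v i)) - p‖⁻¹ • ((v i + s • (v (i + 1) - v i)) - p))
        (Set.Icc 0 1)
      ≤ ENNReal.ofReal (angle (v i - p) (v (i + 1) - p)) := fun i =>
    edge_bound (v i) (v (i + 1)) p (sub_ne_zero.2 (hedge i)) (hp i)
  have key : (∑ i : Fin (n + 3), angle (v i - p) (v (i + 1) - p))
      ≤ ∑ i : Fin (n + 3), angle (v (i + 1) - v i) (v (i + 1 + 1) - v (i + 1)) := by
    have hAC : ∀ i : Fin (n + 3), angle (v i - p) (v (i + 1) - p)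
        = angle (v i - p) (v (i + 1) - v i)
          - angle (v (i + 1) - p) (v (i + 1) - v i) := by
      intro i
      have h := angle_add_angle_sub_add_angle_sub_eq_pi (v i - p) (hvne (i + 1))
      have hxy : (v i - p) - (v (i + 1) - p) = -(v (i + 1) - v i) := by abel
      have hyx : (v (i + 1) - p) - (v i - p) = v (i + 1) - v i := by abel
      rw [hxy, hyx, angle_neg_right] at h
      linarith
    have htri : ∀ i : Fin (n + 3),
        angle (v (i + 1) - p) (v (i + 1 + 1) - v (i + 1))
          ≤ angle (v (i + 1) - p) (v (i + 1) - v i)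
            + angle (v (i + 1) - v i) (v (i + 1 + 1) - v (i + 1)) :=
      fun i => angle_triangle' _ _ _
    have hre : (∑ i : Fin (n + 3), angle (v i - p) (v (i + 1) - v i))
        = ∑ i : Fin (n + 3), angle (v (i + 1) - p) (v (i + 1 + 1) - v (i + 1)) :=
      (Equiv.sum_comp (Equiv.addRight (1 : Fin (n + 3)))
        (fun j => angle (v j - p) (v (j + 1) - v j))).symm
    calc (∑ i : Fin (n + 3), angle (v i - p) (v (i + 1) - p))
        = ∑ i : Fin (n + 3), (angle (v i - p) (v (i + 1) - v i)
            - angle (v (i + 1) - p) (v (i + 1) - v i)) :=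
          Finset.sum_congr rfl fun i _ => hAC i
      _ = (∑ i : Fin (n + 3), angle (v i - p) (v (i + 1) - v i))
            - ∑ i : Fin (n + 3), angle (v (i + 1) - p) (v (i + 1) - v i) :=
          Finset.sum_sub_distrib _ _
      _ = (∑ i : Fin (n + 3), angle (v (i + 1) - p) (v (i + 1 + 1) - v (i + 1)))
            - ∑ i : Fin (n + 3), angle (v (i + 1) - p) (v (i + 1) - v i) := by rw [hre]
      _ = ∑ i : Fin (n + 3), (angle (v (i + 1) - p) (v (i + 1 + 1) - v (i + 1))
            - angle (v (i + 1) - p) (v (i + 1) - v i)) := (Finset.sum_sub_distrib _ _).symm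
      _ ≤ ∑ i : Fin (n + 3), angle (v (i + 1) - v i) (v (i + 1 + 1) - v (i + 1)) :=
          Finset.sum_le_sum fun i _ => by linarith [htri i]
  calc (∑ i : Fin (n + 3),
        eVariationOn
          (fun s : ℝ =>
            p + ‖(v i + s • (v (i + 1) - v i)) - p‖⁻¹ • ((v i + s • (v (i + 1) - v i)) - p))
          (Set.Icc 0 1))
      ≤ ∑ i : Fin (n + 3), ENNReal.ofReal (angle (v i - p) (v (i + 1) - p)) :=
        Finset.sum_le_sum fun i _ => step1 i
    _ = ENNReal.ofReal (∑ i : Fin (n + 3), angle (v i - p) (v (i + 1) - p)) :=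
        (ENNReal.ofReal_sum_of_nonneg fun i _ => angle_nonneg _ _).symm
    _ ≤ ENNReal.ofReal (∑ i : Fin (n + 3),
          angle (v (i + 1) - v i) (v (i + 1 + 1) - v (i + 1))) :=
        ENNReal.ofReal_le_ofReal key
end
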